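/- arXiv:math/0408203 — 2 statements merged into one kernel-verified Lean document; each statement's English description precedes it below -/
import Mathlib

section
/- Let J1, J2 ⊂ (1/m,1) be closed intervals such that for every γ ∈ J1, λ ∈ J2 and f ∈ 𝓑, it is not the case that both γ and λ are roots of f of multiplicity ≥ 2. Then 𝓑 can be partitioned into two disjoint subsets 𝓑′ and 𝓑″ such that J1 is a set of transversality for 𝓑′ and J2 is a set of transversality for 𝓑″. -/
open MeasureTheory Filter Set
open scoped ENNReal Topology

noncomputable section

/-- Evaluation of the power series with coefficient sequence `c` at `x`. -/
def Beval (c : ℕ → ℝ) (x : ℝ) : ℝ := ∑' n, c n * x ^ n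

/-- Membership in `𝓑̃`: all coefficients lie in `D − D`. -/
def memBtilde (m : ℕ) (d : Fin m → ℝ) (c : ℕ → ℝ) : Prop :=
  ∀ n, ∃ i j, c n = d i - d j

/-- Membership in `𝓑`: all coefficients lie in `D − D` and the constant term is nonzero. -/
def memB (m : ℕ) (d : Fin m → ℝ) (c : ℕ → ℝ) : Prop :=
  memBtilde m d c ∧ c 0 ≠ 0

/-- `α` is a root of multiplicity at least 2 of the power series with coefficients `c`. -/
def HasDoubleRootAt (c : ℕ → ℝ) (α : ℝ) : Prop :=
  Beval c α = 0 ∧ deriv (Beval c) α = 0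

/-- `J` is a set of transversality for `B ⊆ 𝓑`. -/
def IsTransvOn (J : Set ℝ) (B : Set (ℕ → ℝ)) : Prop :=
  ∃ M : ℝ, 0 < M ∧ ∀ c ∈ B, ∀ r : ℝ, 0 < r →
    volume {α ∈ J | |Beval c α| < r} < ENNReal.ofReal (M * r)

def shiftc (c : ℕ → ℝ) : ℕ → ℝ := fun n => ((n : ℝ) + 1) * c (n + 1)

lemma summable_aux (k : ℕ) {b : ℝ} (hb0 : 0 < b) (hb1 : b < 1) :
    Summable (fun n : ℕ => ((n : ℝ) + 1) ^ k * b ^ n) := by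
  have h0 : Summable (fun n : ℕ => (n : ℝ) ^ k * b ^ n) :=
    summable_pow_mul_geometric_of_norm_lt_one k
      (by rwa [Real.norm_eq_abs, abs_of_pos hb0])
  have h1 : Summable (fun n : ℕ => ((n + 1 : ℕ) : ℝ) ^ k * b ^ (n + 1)) :=
    (summable_nat_add_iff 1).2 h0
  have h2 := h1.mul_left (1 / b)
  refine h2.congr fun n => ?_
  push_cast
  field_simp
  ring

lemma CB_shift {c : ℕ → ℝ} {A : ℝ} {k : ℕ} (hc : ∀ n, |c n| ≤ A * ((n : ℝ) + 1) ^ k) :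
    ∀ n, |shiftc c n| ≤ (2 ^ k * A) * ((n : ℝ) + 1) ^ (k + 1) := by
  have hA : 0 ≤ A := le_trans (abs_nonneg _) (by simpa using hc 0)
  intro n
  have h1 : |shiftc c n| = ((n : ℝ) + 1) * |c (n + 1)| := by
    rw [shiftc, abs_mul, abs_of_nonneg (by positivity : (0:ℝ) ≤ (n : ℝ) + 1)]
  have h2 : |c (n + 1)| ≤ A * ((n : ℝ) + 1 + 1) ^ k := by
    have h := hc (n + 1); push_cast at h; exact h
  have hn2 : ((n : ℝ) + 1 + 1) ≤ 2 * ((n : ℝ) + 1) := by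
    have : (0:ℝ) ≤ (n : ℝ) := Nat.cast_nonneg n
    linarith
  calc |shiftc c n| ≤ ((n : ℝ) + 1) * (A * ((n : ℝ) + 1 + 1) ^ k) := by
        rw [h1]; exact mul_le_mul_of_nonneg_left h2 (by positivity)
    _ ≤ ((n : ℝ) + 1) * (A * (2 * ((n : ℝ) + 1)) ^ k) := by
        apply mul_le_mul_of_nonneg_left _ (by positivity)
        apply mul_le_mul_of_nonneg_left _ hA
        exact pow_le_pow_left₀ (by positivity) hn2 k
    _ = (2 ^ k * A) * ((n : ℝ) + 1) ^ (k + 1) := by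
        rw [mul_pow, pow_succ]; ring

lemma summable_Beval {c : ℕ → ℝ} {A : ℝ} {k : ℕ} (hc : ∀ n, |c n| ≤ A * ((n : ℝ) + 1) ^ k)
    {b x : ℝ} (hb0 : 0 < b) (hb1 : b < 1) (hx : |x| ≤ b) :
    Summable (fun n => c n * x ^ n) := by
  have hA : 0 ≤ A := le_trans (abs_nonneg _) (by simpa using hc 0)
  apply Summable.of_norm_bounded ((summable_aux k hb0 hb1).mul_left A)
  intro n
  rw [Real.norm_eq_abs, abs_mul, abs_pow]
  calc |c n| * |x| ^ n ≤ (A * ((n : ℝ) + 1) ^ k) * b ^ n :=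
        mul_le_mul (hc n) (pow_le_pow_left₀ (abs_nonneg x) hx n) (by positivity)
          (mul_nonneg hA (by positivity))
    _ = A * (((n : ℝ) + 1) ^ k * b ^ n) := by ring

lemma abs_Beval_le {c : ℕ → ℝ} {A : ℝ} {k : ℕ} (hc : ∀ n, |c n| ≤ A * ((n : ℝ) + 1) ^ k)
    {b x : ℝ} (hb0 : 0 < b) (hb1 : b < 1) (hx : |x| ≤ b) :
    |Beval c x| ≤ A * ∑' n : ℕ, ((n : ℝ) + 1) ^ k * b ^ n := by
  have hA : 0 ≤ A := le_trans (abs_nonneg _) (by simpa using hc 0)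
  have hsum := summable_Beval hc hb0 hb1 hx
  have hu := (summable_aux k hb0 hb1).mul_left A
  have habs : Summable (fun n : ℕ => |c n| * |x| ^ n) := by
    simpa [abs_mul, abs_pow] using hsum.abs
  calc |Beval c x| ≤ ∑' n : ℕ, |c n| * |x| ^ n := by
        have h : Summable fun n => ‖c n * x ^ n‖ := by
          simpa [Real.norm_eq_abs, abs_mul, abs_pow] using habs
        simpa [Beval, Real.norm_eq_abs, abs_mul, abs_pow] using norm_tsum_le_tsum_norm h
    _ ≤ ∑' n : ℕ, A * (((n : ℝ) + 1) ^ k * b ^ n) := by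
        apply Summable.tsum_le_tsum _ habs hu
        intro n
        calc |c n| * |x| ^ n ≤ (A * ((n : ℝ) + 1) ^ k) * b ^ n :=
              mul_le_mul (hc n) (pow_le_pow_left₀ (abs_nonneg x) hx n) (by positivity)
                (by positivity)
          _ = A * (((n : ℝ) + 1) ^ k * b ^ n) := by ring
    _ = A * ∑' n : ℕ, ((n : ℝ) + 1) ^ k * b ^ n := by rw [tsum_mul_left]

lemma hasDerivAt_Beval {c : ℕ → ℝ} {A : ℝ} {k : ℕ} (hc : ∀ n, |c n| ≤ A * ((n : ℝ) + 1) ^ k)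
    {x : ℝ} (hx : |x| < 1) : HasDerivAt (Beval c) (Beval (shiftc c) x) x := by
  have hA : 0 ≤ A := le_trans (abs_nonneg _) (by simpa using hc 0)
  set b' : ℝ := (|x| + 1) / 2 with hb'
  have hxb : |x| < b' := by rw [hb']; linarith
  have hb0 : 0 < b' := lt_of_le_of_lt (abs_nonneg x) hxb
  have hb1 : b' < 1 := by rw [hb']; linarith
  set u : ℕ → ℝ := fun n => (A / b') * (((n : ℝ) + 1) ^ (k + 1) * b' ^ n) with hu
  have hus : Summable u := (summable_aux (k + 1) hb0 hb1).mul_left _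
  have hbound : ∀ (n : ℕ) (y : ℝ), y ∈ Ioo (-b') b' →
      ‖c n * ((n : ℝ) * y ^ (n - 1))‖ ≤ u n := by
    intro n y hy
    have hyb : |y| ≤ b' := by rw [abs_le]; exact ⟨hy.1.le, hy.2.le⟩
    cases n with
    | zero => simp [hu]; positivity
    | succ m =>
      have hcm : |c (m + 1)| ≤ A * ((m : ℝ) + 1 + 1) ^ k := by
        have h := hc (m + 1); push_cast at h; exact h
      have hym : |y| ^ m ≤ b' ^ m := pow_le_pow_left₀ (abs_nonneg y) hyb m
      have e1 : u (m + 1) = A * (((m : ℝ) + 1 + 1) ^ (k + 1) * b' ^ m) := by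
        rw [hu]; push_cast; rw [pow_succ]; field_simp; ring
      have e2 : ‖c (m + 1) * (((m + 1 : ℕ) : ℝ) * y ^ (m + 1 - 1))‖
          = |c (m + 1)| * (((m : ℝ) + 1) * |y| ^ m) := by
        rw [Real.norm_eq_abs, abs_mul, abs_mul, abs_pow, Nat.abs_cast]
        push_cast; ring
      rw [e2, e1]
      have hm1 : ((m : ℝ) + 1) ≤ ((m : ℝ) + 1 + 1) := by linarith
      calc |c (m + 1)| * (((m : ℝ) + 1) * |y| ^ m)
          ≤ (A * ((m : ℝ) + 1 + 1) ^ k) * (((m : ℝ) + 1 + 1) * b' ^ m) := by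
            apply mul_le_mul hcm _ (by positivity) (by positivity)
            exact mul_le_mul hm1 hym (by positivity) (by positivity)
        _ = A * (((m : ℝ) + 1 + 1) ^ (k + 1) * b' ^ m) := by rw [pow_succ]; ring
  have hsum0 : Summable (fun n => c n * (0 : ℝ) ^ n) := by
    apply summable_of_ne_finset_zero (s := {0})
    intro n hn
    simp only [Finset.mem_singleton] at hn
    simp [zero_pow hn]
  have key := hasDerivAt_tsum_of_isPreconnected hus (isOpen_Ioo (a := -b') (b := b'))
      (convex_Ioo _ _).isPreconnected
      (g := fun n y => c n * y ^ n) (g' := fun n y => c n * ((n : ℝ) * y ^ (n - 1)))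
      (fun n y _ => (hasDerivAt_pow n y).const_mul (c n))
      hbound (by constructor <;> [linarith; exact hb0] : (0:ℝ) ∈ Ioo (-b') b')
      hsum0 (by rw [mem_Ioo, ← abs_lt]; exact hxb)
  have hxmem : x ∈ Ioo (-b') b' := by rw [mem_Ioo, ← abs_lt]; exact hxb
  have hs' : Summable (fun n => c n * ((n : ℝ) * x ^ (n - 1))) := by
    apply Summable.of_norm_bounded hus
    intro n; exact hbound n x hxmem
  have heq : Beval (shiftc c) x = ∑' n, c n * ((n : ℝ) * x ^ (n - 1)) := by
    rw [Summable.tsum_eq_zero_add hs']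
    simp only [Nat.cast_zero, zero_mul, mul_zero, zero_add]
    rw [Beval]
    apply tsum_congr
    intro n
    rw [shiftc]
    push_cast
    ring
  rw [heq]
  exact key

lemma continuousOn_Beval {A : ℝ} (hA : 0 ≤ A) (k : ℕ) {b : ℝ} (hb0 : 0 < b) (hb1 : b < 1) :
    ContinuousOn (fun p : (ℕ → ℝ) × ℝ => Beval p.1 p.2)
      {p : (ℕ → ℝ) × ℝ | (∀ n, |p.1 n| ≤ A * ((n : ℝ) + 1) ^ k) ∧ |p.2| ≤ b} := by
  show ContinuousOn (fun p : (ℕ → ℝ) × ℝ => ∑' n, p.1 n * p.2 ^ n) _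
  apply continuousOn_tsum (u := fun n : ℕ => A * (((n : ℝ) + 1) ^ k * b ^ n))
  · intro n
    exact (((continuous_apply n).comp continuous_fst).mul
      ((continuous_pow n).comp continuous_snd)).continuousOn
  · exact (summable_aux k hb0 hb1).mul_left A
  · intro n p hp
    rw [Real.norm_eq_abs, abs_mul, abs_pow]
    calc |p.1 n| * |p.2| ^ n ≤ (A * ((n : ℝ) + 1) ^ k) * b ^ n :=
          mul_le_mul (hp.1 n) (pow_le_pow_left₀ (abs_nonneg _) hp.2 n) (by positivity)
            (mul_nonneg hA (by positivity))
      _ = A * (((n : ℝ) + 1) ^ k * b ^ n) := by ring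

lemma diam_piece {f f1 f2 : ℝ → ℝ} {a b C δ r : ℝ} (hC : 0 < C) (hδ : 0 < δ)
    (hd1 : ∀ x ∈ Icc a b, HasDerivAt f (f1 x) x)
    (hd2 : ∀ x ∈ Icc a b, HasDerivAt f1 (f2 x) x)
    (hC2 : ∀ x ∈ Icc a b, |f2 x| ≤ C)
    (hlow : ∀ x ∈ Icc a b, δ ≤ max |f x| |f1 x|) (hr : 0 < r) (hrδ : r ≤ δ / 2)
    {x y : ℝ} (hx : x ∈ Icc a b ∧ |f x| < r) (hy : y ∈ Icc a b ∧ |f y| < r)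
    (hxy : x ≤ y) (hclose : y - x ≤ δ / (2 * C)) : y - x ≤ 4 * r / δ := by
  rcases eq_or_lt_of_le hxy with rfl | hlt
  · simp; positivity
  · have hxI := hx.1
    have hyI := hy.1
    have hIcc : Icc x y ⊆ Icc a b := Icc_subset_Icc hxI.1 hyI.2
    have cont : ContinuousOn f (Icc x y) := fun z hz =>
      ((hd1 z (hIcc hz)).continuousAt).continuousWithinAt
    have derivs : ∀ z ∈ Ioo x y, HasDerivAt f (f1 z) z := fun z hz =>
      hd1 z (hIcc ⟨hz.1.le, hz.2.le⟩)
    obtain ⟨ξ, hξ, hslope⟩ := exists_hasDerivAt_eq_slope f f1 hlt cont derivs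
    have hξI : ξ ∈ Icc a b := hIcc ⟨hξ.1.le, hξ.2.le⟩
    have h5 : δ ≤ |f1 x| := by
      rcases le_max_iff.1 (hlow x hxI) with h | h
      · linarith [hx.2]
      · exact h
    have hseg : ∀ z ∈ Icc a b, HasDerivWithinAt f1 (f2 z) (Icc a b) z := fun z hz =>
      (hd2 z hz).hasDerivWithinAt
    have hb' := (convex_Icc a b).norm_image_sub_le_of_norm_hasDerivWithin_le hseg
      (fun z hz => by rw [Real.norm_eq_abs]; exact hC2 z hz) hxI hξI
    rw [Real.norm_eq_abs, Real.norm_eq_abs] at hb'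
    have hξx : |ξ - x| ≤ δ / (2 * C) := by
      rw [abs_of_nonneg (by linarith [hξ.1] : (0:ℝ) ≤ ξ - x)]
      linarith [hξ.2]
    have h6 : |f1 ξ - f1 x| ≤ δ / 2 := by
      calc |f1 ξ - f1 x| ≤ C * |ξ - x| := hb'
        _ ≤ C * (δ / (2 * C)) := by
            exact mul_le_mul_of_nonneg_left hξx hC.le
        _ = δ / 2 := by field_simp
    have h7 : δ / 2 ≤ |f1 ξ| := by
      have := abs_sub_abs_le_abs_sub (f1 x) (f1 ξ)
      rw [abs_sub_comm] at h6
      linarith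
    have h8 : |f y - f x| = |f1 ξ| * (y - x) := by
      rw [hslope, abs_div, abs_of_nonneg (by linarith : (0:ℝ) ≤ y - x)]
      exact (div_mul_cancel₀ _ (ne_of_gt (by linarith : (0:ℝ) < y - x))).symm
    have h9 : |f y - f x| < 2 * r := by
      calc |f y - f x| ≤ |f y| + |f x| := abs_sub _ _
        _ < 2 * r := by linarith [hx.2, hy.2]
    have h10 : δ / 2 * (y - x) < 2 * r := by
      calc δ / 2 * (y - x) ≤ |f1 ξ| * (y - x) :=
            mul_le_mul_of_nonneg_right h7 (by linarith)
        _ = |f y - f x| := h8.symm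
        _ < 2 * r := h9
    rw [le_div_iff₀ hδ]
    nlinarith [h10]

lemma measure_est {f f1 f2 : ℝ → ℝ} {a b C δ r : ℝ} (hab : a ≤ b) (hC : 0 < C) (hδ : 0 < δ)
    (hd1 : ∀ x ∈ Icc a b, HasDerivAt f (f1 x) x)
    (hd2 : ∀ x ∈ Icc a b, HasDerivAt f1 (f2 x) x)
    (hC2 : ∀ x ∈ Icc a b, |f2 x| ≤ C)
    (hlow : ∀ x ∈ Icc a b, δ ≤ max |f x| |f1 x|) (hr : 0 < r) :
    volume {x ∈ Icc a b | |f x| < r} ≤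
      ENNReal.ofReal (((2 * C * (b - a) / δ + 1) * (4 / δ) + 2 * (b - a) / δ) * r) := by
  set M0 : ℝ := (2 * C * (b - a) / δ + 1) * (4 / δ) + 2 * (b - a) / δ with hM0
  by_cases hcase : r ≤ δ / 2
  · -- small r : grid argument
    set h : ℝ := δ / (2 * C) with hh
    have hh0 : 0 < h := by positivity
    set N : ℕ := ⌊(b - a) / h⌋₊ + 1 with hN
    set S : Set ℝ := {x ∈ Icc a b | |f x| < r} with hS
    have cover : S ⊆ ⋃ k ∈ Finset.range N, (S ∩ Icc (a + k * h) (a + k * h + h)) := by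
      intro x hx
      have hxI : x ∈ Icc a b := hx.1
      set k : ℕ := ⌊(x - a) / h⌋₊ with hk
      have hx0 : 0 ≤ (x - a) / h := div_nonneg (by linarith [hxI.1]) hh0.le
      have hkN : k < N := by
        rw [hN, Nat.lt_succ_iff, hk]
        apply Nat.floor_le_floor
        rw [div_le_div_iff₀ hh0 hh0]
        nlinarith [hxI.2, hh0.le]
      refine mem_biUnion (Finset.mem_range.2 hkN) ⟨hx, ?_, ?_⟩
      · have := Nat.floor_le hx0
        rw [le_div_iff₀ hh0] at this
        · linarith
      · have := Nat.lt_floor_add_one ((x - a) / h)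
        rw [div_lt_iff₀ hh0] at this
        push_cast at this
        linarith
    have piece : ∀ k : ℕ, volume (S ∩ Icc (a + k * h) (a + k * h + h)) ≤
        ENNReal.ofReal (4 * r / δ) := by
      intro k
      refine le_trans (Real.volume_le_diam _) (EMetric.diam_le ?_)
      intro x hx y hy
      rw [edist_dist, Real.dist_eq]
      apply ENNReal.ofReal_le_ofReal
      have main : ∀ x y : ℝ, x ∈ S ∩ Icc (a + k * h) (a + k * h + h) →
          y ∈ S ∩ Icc (a + k * h) (a + k * h + h) → x ≤ y → y - x ≤ 4 * r / δ := by
        intro x y hx hy hxy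
        exact diam_piece hC hδ hd1 hd2 hC2 hlow hr hcase ⟨hx.1.1, hx.1.2⟩ ⟨hy.1.1, hy.1.2⟩
          hxy (by have h1 := hx.2.1; have h2 := hy.2.2; rw [← hh]; linarith)
      rcases le_total x y with hle | hle
      · rw [abs_of_nonpos (by linarith)]
        have := main x y hx hy hle
        linarith
      · rw [abs_of_nonneg (by linarith)]
        exact main y x hy hx hle
    calc volume S ≤ volume (⋃ k ∈ Finset.range N, (S ∩ Icc (a + k * h) (a + k * h + h))) :=
          measure_mono cover
      _ ≤ ∑ k ∈ Finset.range N, volume (S ∩ Icc (a + k * h) (a + k * h + h)) :=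
          measure_biUnion_finset_le _ _
      _ ≤ ∑ _k ∈ Finset.range N, ENNReal.ofReal (4 * r / δ) :=
          Finset.sum_le_sum fun k _ => piece k
      _ = N * ENNReal.ofReal (4 * r / δ) := by
          rw [Finset.sum_const, Finset.card_range, nsmul_eq_mul]
      _ = ENNReal.ofReal ((N : ℝ) * (4 * r / δ)) := by
          rw [ENNReal.ofReal_mul (Nat.cast_nonneg N)]
          rw [ENNReal.ofReal_natCast]
      _ ≤ ENNReal.ofReal (M0 * r) := by
          apply ENNReal.ofReal_le_ofReal
          have hNle : (N : ℝ) ≤ (b - a) / h + 1 := by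
            rw [hN]
            push_cast
            have := Nat.floor_le (show (0:ℝ) ≤ (b - a) / h from div_nonneg (by linarith) hh0.le)
            linarith
          have hhb : (b - a) / h = 2 * C * (b - a) / δ := by
            rw [hh]; field_simp
          rw [hM0]
          have h1 : (N : ℝ) * (4 * r / δ) ≤ ((b - a) / h + 1) * (4 * r / δ) :=
            mul_le_mul_of_nonneg_right hNle (div_nonneg (by linarith) hδ.le)
          have h2 : (0:ℝ) ≤ 2 * (b - a) / δ * r :=
            mul_nonneg (div_nonneg (by linarith [Nat.floor_le (show (0:ℝ) ≤ (b - a) / h from div_nonneg (by linarith) hh0.le)]) hδ.le) hr.le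
          rw [hhb] at h1
          have hba : 0 ≤ b - a := by linarith
          have h2' : 0 ≤ 2 * (b - a) / δ * r :=
            mul_nonneg (div_nonneg (by linarith) hδ.le) hr.le
          have expand : ((2 * C * (b - a) / δ + 1) * (4 / δ) + 2 * (b - a) / δ) * r
              = (2 * C * (b - a) / δ + 1) * (4 / δ) * r + 2 * (b - a) / δ * r := by ring
          have e3 : (2 * C * (b - a) / δ + 1) * (4 * r / δ)
              = (2 * C * (b - a) / δ + 1) * (4 / δ) * r := by ring
          rw [expand]
          rw [e3] at h1
          linarith
  · -- large r
    push_neg at hcase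
    calc volume {x ∈ Icc a b | |f x| < r} ≤ volume (Icc a b) := measure_mono (sep_subset _ _)
      _ = ENNReal.ofReal (b - a) := Real.volume_Icc
      _ ≤ ENNReal.ofReal (M0 * r) := by
          apply ENNReal.ofReal_le_ofReal
          have hba : 0 ≤ b - a := by linarith
          have h1 : b - a ≤ 2 * (b - a) / δ * r := by
            rw [div_mul_eq_mul_div, le_div_iff₀ hδ]
            nlinarith
          have e1 : 0 ≤ 2 * C * (b - a) / δ :=
            div_nonneg (mul_nonneg (by positivity) hba) hδ.le
          have e2 : 0 ≤ 4 / δ := by positivity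
          have h2 : (0:ℝ) ≤ (2 * C * (b - a) / δ + 1) * (4 / δ) * r :=
            mul_nonneg (mul_nonneg (by linarith) e2) hr.le
          have expand : M0 * r
              = (2 * C * (b - a) / δ + 1) * (4 / δ) * r + 2 * (b - a) / δ * r := by
            rw [hM0]; ring
          rw [expand]
          linarith

set_option maxHeartbeats 2000000 in
/-- If `J₁, J₂ ⊂ (1/m, 1)` are closed intervals such that no `f ∈ 𝓑` has roots of multiplicity
`≥ 2` at some `γ ∈ J₁` and some `λ ∈ J₂` simultaneously, then `𝓑` can be partitioned into
`𝓑′` and `𝓑″` such that `J₁` is a set of transversality for `𝓑′` and `J₂` for `𝓑″`. -/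
theorem transversality_partition
    (m : ℕ) (hm : 2 ≤ m) (d : Fin m → ℝ) (hd0 : d ⟨0, by omega⟩ = 0) (hd : StrictMono d)
    (a1 b1 a2 b2 : ℝ) (hJ1 : Icc a1 b1 ⊆ Ioo (1 / (m : ℝ)) 1)
    (hJ2 : Icc a2 b2 ⊆ Ioo (1 / (m : ℝ)) 1)
    (hyp : ∀ g ∈ Icc a1 b1, ∀ l ∈ Icc a2 b2, ∀ c : ℕ → ℝ, memB m d c →
      ¬ (HasDoubleRootAt c g ∧ HasDoubleRootAt c l)) :
    ∃ B' B'' : Set (ℕ → ℝ),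
      B' ∪ B'' = {c | memB m d c} ∧ B' ∩ B'' = ∅ ∧
      IsTransvOn (Icc a1 b1) B' ∧ IsTransvOn (Icc a2 b2) B'' := by
  classical
  by_cases hab1 : a1 ≤ b1
  swap
  · refine ⟨{c | memB m d c}, ∅, by simp, by simp, ?_, ?_⟩
    · refine ⟨1, one_pos, fun c _ r hr => ?_⟩
      have he : {α ∈ Icc a1 b1 | |Beval c α| < r} = ∅ := by
        rw [Icc_eq_empty hab1]; ext z; simp
      rw [he]
      simp only [measure_empty]
      exact ENNReal.ofReal_pos.2 (by linarith)
    · exact ⟨1, one_pos, fun c hc => absurd hc (notMem_empty c)⟩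
  by_cases hab2 : a2 ≤ b2
  swap
  · refine ⟨∅, {c | memB m d c}, by simp, by simp, ?_, ?_⟩
    · exact ⟨1, one_pos, fun c hc => absurd hc (notMem_empty c)⟩
    · refine ⟨1, one_pos, fun c _ r hr => ?_⟩
      have he : {α ∈ Icc a2 b2 | |Beval c α| < r} = ∅ := by
        rw [Icc_eq_empty hab2]; ext z; simp
      rw [he]
      simp only [measure_empty]
      exact ENNReal.ofReal_pos.2 (by linarith)
  -- main case
  have hmR : (0:ℝ) < (m:ℝ) := by exact_mod_cast (by omega : 0 < m)
  have hm0 : (0:ℝ) < 1 / (m:ℝ) := by positivity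
  have hb1lt1 : b1 < 1 := (hJ1 ⟨hab1, le_refl b1⟩).2
  have hb2lt1 : b2 < 1 := (hJ2 ⟨hab2, le_refl b2⟩).2
  set b : ℝ := max b1 b2 with hbdef
  have hbpos : 0 < b := by
    have := (hJ1 ⟨le_refl a1, hab1⟩).1
    have h2 : 1/(m:ℝ) < b1 := lt_of_lt_of_le this hab1
    exact lt_of_lt_of_le (lt_trans hm0 h2) (le_max_left _ _)
  have hblt1 : b < 1 := max_lt hb1lt1 hb2lt1
  have hmemJ1 : ∀ x ∈ Icc a1 b1, 0 < x ∧ |x| ≤ b ∧ |x| < 1 := by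
    intro x hx
    have hx0 : 0 < x := lt_trans hm0 (hJ1 hx).1
    exact ⟨hx0, by rw [abs_of_pos hx0]; exact le_trans hx.2 (le_max_left _ _),
      by rw [abs_of_pos hx0]; exact (hJ1 hx).2⟩
  have hmemJ2 : ∀ x ∈ Icc a2 b2, 0 < x ∧ |x| ≤ b ∧ |x| < 1 := by
    intro x hx
    have hx0 : 0 < x := lt_trans hm0 (hJ2 hx).1
    exact ⟨hx0, by rw [abs_of_pos hx0]; exact le_trans hx.2 (le_max_right _ _),
      by rw [abs_of_pos hx0]; exact (hJ2 hx).2⟩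
  -- coefficient bound
  have hmm : m - 1 < m := by omega
  set A0 : ℝ := d ⟨m - 1, hmm⟩ with hA0def
  have hdge : ∀ i : Fin m, 0 ≤ d i := by
    intro i
    rw [← hd0]
    exact hd.monotone (by simp [Fin.le_def])
  have hdle : ∀ i : Fin m, d i ≤ A0 := by
    intro i
    exact hd.monotone (by rw [Fin.le_def]; exact Nat.le_pred_of_lt i.isLt)
  have hA0nn : 0 ≤ A0 := hdge _
  have hcb : ∀ c : ℕ → ℝ, memBtilde m d c → ∀ n, |c n| ≤ A0 * ((n:ℝ)+1)^0 := by
    intro c hc n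
    obtain ⟨i, j, hij⟩ := hc n
    rw [hij, pow_zero, mul_one, abs_le]
    constructor
    · linarith [hdle j, hdge i]
    · linarith [hdle i, hdge j]
  -- derivative facts
  have hderiv : ∀ c : ℕ → ℝ, memBtilde m d c → ∀ x : ℝ, |x| < 1 →
      HasDerivAt (Beval c) (Beval (shiftc c) x) x := fun c hc x hx =>
    hasDerivAt_Beval (hcb c hc) hx
  have hderiv2 : ∀ c : ℕ → ℝ, memBtilde m d c → ∀ x : ℝ, |x| < 1 →
      HasDerivAt (Beval (shiftc c)) (Beval (shiftc (shiftc c)) x) x := fun c hc x hx =>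
    hasDerivAt_Beval (CB_shift (hcb c hc)) hx
  -- uniform second derivative bound
  set T2 : ℝ := ∑' n : ℕ, ((n:ℝ)+1)^(0+1+1) * b^n with hT2
  have hT2nn : 0 ≤ T2 := tsum_nonneg fun n => by positivity
  set C : ℝ := (2^(0+1) * (2^0 * A0)) * T2 + 1 with hCdef
  have hEnn : (0:ℝ) ≤ 2^(0+1) * (2^0 * A0) :=
    mul_nonneg (by norm_num) (mul_nonneg (by norm_num) hA0nn)
  have hCpos : 0 < C := by
    have := mul_nonneg hEnn hT2nn
    rw [hCdef]; linarith
  have hC2 : ∀ c : ℕ → ℝ, memBtilde m d c → ∀ x : ℝ, |x| ≤ b →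
      |Beval (shiftc (shiftc c)) x| ≤ C := by
    intro c hc x hx
    have h := abs_Beval_le (CB_shift (CB_shift (hcb c hc))) hbpos hblt1 hx
    rw [← hT2] at h
    rw [hCdef]
    linarith
  -- compactness
  set R : Set ℝ := Set.range (fun p : Fin m × Fin m => d p.1 - d p.2) with hR
  have hRfin : R.Finite := Set.finite_range _
  have hKc : IsCompact (Set.pi Set.univ fun _ : ℕ => R) :=
    isCompact_univ_pi fun _ => hRfin.isCompact
  set K0 : Set (ℕ → ℝ) := {c | memB m d c} with hK0
  have hK0eq : K0 = (Set.pi Set.univ fun _ : ℕ => R) ∩ ((fun c : ℕ → ℝ => c 0) ⁻¹' (R \ {0})) := by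
    ext c
    constructor
    · rintro ⟨h1, h2⟩
      refine ⟨fun n _ => ?_, ?_, h2⟩
      · obtain ⟨i, j, e⟩ := h1 n; exact ⟨(i, j), e.symm⟩
      · obtain ⟨i, j, e⟩ := h1 0; exact ⟨(i, j), e.symm⟩
    · rintro ⟨h1, h2⟩
      refine ⟨fun n => ?_, h2.2⟩
      obtain ⟨p, e⟩ := h1 n (Set.mem_univ n)
      exact ⟨p.1, p.2, e.symm⟩
  have hK0c : IsCompact K0 := by
    rw [hK0eq]
    exact hKc.inter_right
      (((hRfin.subset Set.diff_subset).isClosed).preimage (continuous_apply 0))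
  -- nonemptiness
  have h01 : (⟨0, by omega⟩ : Fin m) < ⟨1, by omega⟩ := by simp [Fin.lt_def]
  set c₀ : ℕ → ℝ := fun n => if n = 0 then d ⟨1, by omega⟩ - d ⟨0, by omega⟩ else 0 with hc₀def
  have hc₀ : memB m d c₀ := by
    constructor
    · intro n
      by_cases hn : n = 0
      · exact ⟨⟨1, by omega⟩, ⟨0, by omega⟩, by simp [hc₀def, hn]⟩
      · exact ⟨⟨0, by omega⟩, ⟨0, by omega⟩, by simp [hc₀def, hn]⟩
    · show (if (0:ℕ) = 0 then d ⟨1, by omega⟩ - d ⟨0, by omega⟩ else 0) ≠ 0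
      rw [if_pos rfl]
      exact sub_ne_zero.2 (ne_of_gt (hd h01))
  -- the function F and its continuity
  set F : (ℕ → ℝ) × ℝ → ℝ := fun p => max |Beval p.1 p.2| |Beval (shiftc p.1) p.2| with hFdef
  have hFnn : ∀ p, 0 ≤ F p := fun p => le_trans (abs_nonneg _) (le_max_left _ _)
  set sStar : Set ((ℕ → ℝ) × ℝ) := {p | memBtilde m d p.1 ∧ |p.2| ≤ b} with hsStar
  have hshiftcont : Continuous shiftc :=
    continuous_pi fun n => continuous_const.mul (continuous_apply (n+1))
  have hcont1 : ContinuousOn (fun p : (ℕ → ℝ) × ℝ => Beval p.1 p.2) sStar := by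
    apply (continuousOn_Beval hA0nn 0 hbpos hblt1).mono
    intro p hp
    exact ⟨hcb p.1 hp.1, hp.2⟩
  have hcont2 : ContinuousOn (fun p : (ℕ → ℝ) × ℝ => Beval (shiftc p.1) p.2) sStar := by
    have hA1 : (0:ℝ) ≤ 2^0 * A0 := mul_nonneg (by norm_num) hA0nn
    have hφ : Continuous (fun p : (ℕ → ℝ) × ℝ => (shiftc p.1, p.2)) :=
      (hshiftcont.comp continuous_fst).prodMk continuous_snd
    have hmapsφ : Set.MapsTo (fun p : (ℕ → ℝ) × ℝ => (shiftc p.1, p.2)) sStar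
        {p : (ℕ → ℝ) × ℝ | (∀ n, |p.1 n| ≤ (2^0 * A0) * ((n:ℝ)+1)^(0+1)) ∧ |p.2| ≤ b} :=
      fun p hp => ⟨CB_shift (hcb p.1 hp.1), hp.2⟩
    exact ContinuousOn.comp (g := fun q : (ℕ → ℝ) × ℝ => Beval q.1 q.2)
      (continuousOn_Beval hA1 1 hbpos hblt1) hφ.continuousOn hmapsφ
  have hFcont : ContinuousOn F sStar := hcont1.abs.sup hcont2.abs
  -- compact triple set and minimum
  set T : Set ((ℕ → ℝ) × (ℝ × ℝ)) := K0 ×ˢ (Icc a1 b1 ×ˢ Icc a2 b2) with hTdef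
  have hTc : IsCompact T := hK0c.prod (isCompact_Icc.prod isCompact_Icc)
  have hTne : T.Nonempty := ⟨⟨c₀, a1, a2⟩, hc₀, ⟨le_refl a1, hab1⟩, ⟨le_refl a2, hab2⟩⟩
  set G : (ℕ → ℝ) × (ℝ × ℝ) → ℝ := fun q => max (F (q.1, q.2.1)) (F (q.1, q.2.2)) with hGdef
  have hmaps1 : Set.MapsTo (fun q : (ℕ → ℝ) × (ℝ × ℝ) => (q.1, q.2.1)) T sStar :=
    fun q hq => ⟨hq.1.1, (hmemJ1 _ hq.2.1).2.1⟩
  have hmaps2 : Set.MapsTo (fun q : (ℕ → ℝ) × (ℝ × ℝ) => (q.1, q.2.2)) T sStar :=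
    fun q hq => ⟨hq.1.1, (hmemJ2 _ hq.2.2).2.1⟩
  have hGcont : ContinuousOn G T := by
    have hφ1 : Continuous (fun q : (ℕ → ℝ) × (ℝ × ℝ) => (q.1, q.2.1)) :=
      continuous_fst.prodMk (continuous_fst.comp continuous_snd)
    have hφ2 : Continuous (fun q : (ℕ → ℝ) × (ℝ × ℝ) => (q.1, q.2.2)) :=
      continuous_fst.prodMk (continuous_snd.comp continuous_snd)
    exact (hFcont.comp hφ1.continuousOn hmaps1).sup (hFcont.comp hφ2.continuousOn hmaps2)
  obtain ⟨q0, hq0T, hq0minOn⟩ := hTc.exists_isMinOn hTne hGcont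
  have hq0min : ∀ q ∈ T, G q0 ≤ G q := fun q hq => isMinOn_iff.1 hq0minOn q hq
  have hmemB0 : memB m d q0.1 := hq0T.1
  have hδpos : 0 < G q0 := by
    rcases lt_or_ge 0 (G q0) with h | h
    · exact h
    exfalso
    have hGle : max (F (q0.1, q0.2.1)) (F (q0.1, q0.2.2)) ≤ 0 := h
    have hF1 : F (q0.1, q0.2.1) = 0 :=
      le_antisymm (le_trans (le_max_left _ _) hGle) (hFnn _)
    have hF2 : F (q0.1, q0.2.2) = 0 :=
      le_antisymm (le_trans (le_max_right _ _) hGle) (hFnn _)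
    simp only [hFdef] at hF1 hF2
    have e1 : Beval q0.1 q0.2.1 = 0 := abs_eq_zero.1
      (le_antisymm (le_trans (le_max_left _ _) hF1.le) (abs_nonneg _))
    have e2 : Beval (shiftc q0.1) q0.2.1 = 0 := abs_eq_zero.1
      (le_antisymm (le_trans (le_max_right _ _) hF1.le) (abs_nonneg _))
    have e3 : Beval q0.1 q0.2.2 = 0 := abs_eq_zero.1
      (le_antisymm (le_trans (le_max_left _ _) hF2.le) (abs_nonneg _))
    have e4 : Beval (shiftc q0.1) q0.2.2 = 0 := abs_eq_zero.1
      (le_antisymm (le_trans (le_max_right _ _) hF2.le) (abs_nonneg _))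
    refine hyp q0.2.1 hq0T.2.1 q0.2.2 hq0T.2.2 q0.1 hmemB0 ⟨⟨e1, ?_⟩, ⟨e3, ?_⟩⟩
    · rw [(hderiv q0.1 hmemB0.1 q0.2.1 (hmemJ1 _ hq0T.2.1).2.2).deriv]
      exact e2
    · rw [(hderiv q0.1 hmemB0.1 q0.2.2 (hmemJ2 _ hq0T.2.2).2.2).deriv]
      exact e4
  set δ : ℝ := G q0 with hδdef
  set P : (ℕ → ℝ) → Prop := fun c => ∀ α ∈ Icc a1 b1, δ ≤ F (c, α) with hPdef
  refine ⟨{c | memB m d c ∧ P c}, {c | memB m d c ∧ ¬ P c}, ?_, ?_, ?_, ?_⟩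
  · ext c; simp only [mem_union, mem_setOf_eq]; tauto
  · ext c; simp only [mem_inter_iff, mem_setOf_eq, mem_empty_iff_false]; tauto
  · -- transversality on J1 for B'
    have hM0nn : (0:ℝ) ≤ (2 * C * (b1 - a1) / δ + 1) * (4 / δ) + 2 * (b1 - a1) / δ := by
      have hba : (0:ℝ) ≤ b1 - a1 := by linarith
      have e1 : (0:ℝ) ≤ 2 * C * (b1 - a1) / δ :=
        div_nonneg (mul_nonneg (by linarith) hba) hδpos.le
      have e2 : (0:ℝ) ≤ 4 / δ := by positivity
      have e3 : (0:ℝ) ≤ 2 * (b1 - a1) / δ := div_nonneg (by linarith) hδpos.le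
      nlinarith
    refine ⟨((2 * C * (b1 - a1) / δ + 1) * (4 / δ) + 2 * (b1 - a1) / δ) + 1,
      by linarith, ?_⟩
    rintro c ⟨hcB, hcP⟩ r hr
    have hd1' : ∀ x ∈ Icc a1 b1, HasDerivAt (Beval c) (Beval (shiftc c) x) x :=
      fun x hx => hderiv c hcB.1 x (hmemJ1 x hx).2.2
    have hd2' : ∀ x ∈ Icc a1 b1,
        HasDerivAt (Beval (shiftc c)) (Beval (shiftc (shiftc c)) x) x :=
      fun x hx => hderiv2 c hcB.1 x (hmemJ1 x hx).2.2
    have hC2' : ∀ x ∈ Icc a1 b1, |Beval (shiftc (shiftc c)) x| ≤ C :=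
      fun x hx => hC2 c hcB.1 x (hmemJ1 x hx).2.1
    have hlow' : ∀ x ∈ Icc a1 b1, δ ≤ max |Beval c x| |Beval (shiftc c) x| :=
      fun x hx => hcP x hx
    have hest := measure_est hab1 hCpos hδpos hd1' hd2' hC2' hlow' hr
    refine lt_of_le_of_lt hest ?_
    rw [ENNReal.ofReal_lt_ofReal_iff (by nlinarith :
      (0:ℝ) < (((2 * C * (b1 - a1) / δ + 1) * (4 / δ) + 2 * (b1 - a1) / δ) + 1) * r)]
    nlinarith
  · -- transversality on J2 for B''
    have hM0nn : (0:ℝ) ≤ (2 * C * (b2 - a2) / δ + 1) * (4 / δ) + 2 * (b2 - a2) / δ := by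
      have hba : (0:ℝ) ≤ b2 - a2 := by linarith
      have e1 : (0:ℝ) ≤ 2 * C * (b2 - a2) / δ :=
        div_nonneg (mul_nonneg (by linarith) hba) hδpos.le
      have e2 : (0:ℝ) ≤ 4 / δ := by positivity
      have e3 : (0:ℝ) ≤ 2 * (b2 - a2) / δ := div_nonneg (by linarith) hδpos.le
      nlinarith
    refine ⟨((2 * C * (b2 - a2) / δ + 1) * (4 / δ) + 2 * (b2 - a2) / δ) + 1,
      by linarith, ?_⟩
    rintro c ⟨hcB, hcnP⟩ r hr
    simp only [hPdef, not_forall] at hcnP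
    obtain ⟨α, hα, hFα⟩ := hcnP
    push_neg at hFα
    have hlow' : ∀ x ∈ Icc a2 b2, δ ≤ max |Beval c x| |Beval (shiftc c) x| := by
      intro x hx
      have hmem : (⟨c, α, x⟩ : (ℕ → ℝ) × (ℝ × ℝ)) ∈ T := ⟨hcB, hα, hx⟩
      have hG := hq0min _ hmem
      simp only [hGdef] at hG
      rcases le_sup_iff.1 hG with hcase | hcase
      · exact absurd hcase (not_le.2 hFα)
      · simpa only [hFdef] using hcase
    have hd1' : ∀ x ∈ Icc a2 b2, HasDerivAt (Beval c) (Beval (shiftc c) x) x :=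
      fun x hx => hderiv c hcB.1 x (hmemJ2 x hx).2.2
    have hd2' : ∀ x ∈ Icc a2 b2,
        HasDerivAt (Beval (shiftc c)) (Beval (shiftc (shiftc c)) x) x :=
      fun x hx => hderiv2 c hcB.1 x (hmemJ2 x hx).2.2
    have hC2' : ∀ x ∈ Icc a2 b2, |Beval (shiftc (shiftc c)) x| ≤ C :=
      fun x hx => hC2 c hcB.1 x (hmemJ2 x hx).2.1
    have hest := measure_est hab2 hCpos hδpos hd1' hd2' hC2' hlow' hr
    refine lt_of_le_of_lt hest ?_
    rw [ENNReal.ofReal_lt_ofReal_iff (by nlinarith :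
      (0:ℝ) < (((2 * C * (b2 - a2) / δ + 1) * (4 / δ) + 2 * (b2 - a2) / δ) + 1) * r)]
    nlinarith
end
end

section
/- Let ν be a finite Borel measure on ℝ that is absolutely continuous with respect to Lebesgue measure, with density f ∈ L²(ℝ). Then lim_{r→0⁺} (1/r)·(ν×ν){(x,y) ∈ ℝ² : |x−y| ≤ r} = 2‖f‖_{L²}². -/
open MeasureTheory Filter Set
open scoped ENNReal Topology

noncomputable section

/-- Continuity of the autocorrelation function `t ↦ ∫ f x * f (x - t)` for `f ∈ L²`. -/
lemma continuous_corr_aux (f : ℝ → ℝ) (hf2 : MemLp f 2 (volume : Measure ℝ)) :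
    Continuous (fun t : ℝ => ∫ x, f x * f (x - t)) := by
  haveI : Fact ((1 : ℝ≥0∞) ≤ 2) := ⟨one_le_two⟩
  set F : Lp ℝ 2 (volume : Measure ℝ) := hf2.toLp f with hFdef
  have hmp : ∀ t : ℝ, MeasurePreserving (fun x : ℝ => x - t)
      (volume : Measure ℝ) volume := fun t => measurePreserving_sub_right volume t
  set c : ℝ → C(ℝ, ℝ) := fun t => ⟨fun x => x - t, by fun_prop⟩ with hcdef
  have hcm : ∀ t : ℝ, MeasurePreserving (c t) (volume : Measure ℝ) volume := hmp
  have hcc : Continuous c :=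
    ContinuousMap.continuous_of_continuous_uncurry _ (continuous_snd.sub continuous_fst)
  have hφ : Continuous fun t : ℝ => Lp.compMeasurePreserving (c t) (hcm t) F :=
    Continuous.compMeasurePreservingLp continuous_const hcc hcm (by norm_num)
  have hinner : Continuous fun t : ℝ =>
      (inner ℝ F (Lp.compMeasurePreserving (c t) (hcm t) F) : ℝ) :=
    continuous_const.inner hφ
  convert hinner using 1
  funext t
  rw [L2.inner_def]
  have h1 : (F : ℝ → ℝ) =ᵐ[volume] f := hf2.coeFn_toLp
  have h2 : (Lp.compMeasurePreserving (c t) (hcm t) F : ℝ → ℝ)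
      =ᵐ[volume] ((F : ℝ → ℝ) ∘ fun x => x - t) :=
    Lp.coeFn_compMeasurePreserving F (hcm t)
  have h3 : ((F : ℝ → ℝ) ∘ fun x => x - t) =ᵐ[volume] fun x => f (x - t) :=
    (hmp t).quasiMeasurePreserving.ae_eq_comp h1
  refine integral_congr_ae ?_
  filter_upwards [h1, h2.trans h3] with x hx1 hx2
  rw [RCLike.inner_apply, starRingEnd_apply, star_trivial, hx1, hx2, mul_comm]

/-- The key identity for the correlation measure. -/
lemma measure_eq_aux (f : ℝ → ℝ) (hm : Measurable f) (h0 : ∀ x, 0 ≤ f x)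
    (hf2 : MemLp f 2 (volume : Measure ℝ))
    [IsFiniteMeasure (volume.withDensity fun x => ENNReal.ofReal (f x))] (r : ℝ) :
    ((volume.withDensity fun x => ENNReal.ofReal (f x)).prod
      (volume.withDensity fun x => ENNReal.ofReal (f x))) {p : ℝ × ℝ | |p.1 - p.2| ≤ r}
    = ENNReal.ofReal (∫ t in Icc (-r) r, ∫ x, f x * f (x - t)) := by
  set ν : Measure ℝ := volume.withDensity fun x => ENNReal.ofReal (f x) with hνdef
  set F : ℝ → ℝ≥0∞ := fun x => ENNReal.ofReal (f x) with hFdef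
  have hF : Measurable F := hm.ennreal_ofReal
  set ψ : ℝ × ℝ → ℝ≥0∞ := fun p => F p.1 * F p.2 with hψdef
  have hψ : Measurable ψ := (hF.comp measurable_fst).mul (hF.comp measurable_snd)
  have hS : MeasurableSet {p : ℝ × ℝ | |p.1 - p.2| ≤ r} :=
    (isClosed_le ((continuous_fst.sub continuous_snd).abs) continuous_const).measurableSet
  -- Step 1: product measure as withDensity
  have hprod : ν.prod ν = (volume.prod volume).withDensity ψ := by
    refine Measure.prod_eq fun s t hs ht => ?_
    rw [withDensity_apply _ (hs.prod ht), ← Measure.prod_restrict]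
    simp only [hψdef]
    rw [lintegral_prod_mul hF.aemeasurable hF.aemeasurable, hνdef,
      withDensity_apply _ hs, withDensity_apply _ ht]
  rw [hprod, withDensity_apply _ hS]
  -- Step 2: change of variables (t, x) ↦ (x, x - t)
  set T : ℝ × ℝ → ℝ × ℝ := fun q => (q.2, q.2 - q.1) with hTdef
  have hT : MeasurePreserving T ((volume : Measure ℝ).prod volume)
      ((volume : Measure ℝ).prod volume) := by
    have hneg : MeasurePreserving (fun z : ℝ × ℝ => (z.1, -z.2))
        ((volume : Measure ℝ).prod volume) ((volume : Measure ℝ).prod volume) :=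
      (MeasurePreserving.id volume).prod (Measure.measurePreserving_neg volume)
    have hshear : MeasurePreserving (fun z : ℝ × ℝ => (z.1, z.1 - z.2))
        ((volume : Measure ℝ).prod volume) ((volume : Measure ℝ).prod volume) := by
      have h := (measurePreserving_prod_add (volume : Measure ℝ) volume).comp hneg
      have he : ((fun z : ℝ × ℝ => (z.1, z.1 + z.2)) ∘ fun z : ℝ × ℝ => (z.1, -z.2))
          = fun z : ℝ × ℝ => (z.1, z.1 - z.2) := by
        funext z
        simp [Function.comp, sub_eq_add_neg]
      rwa [he] at h
    have h := hshear.comp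
      (Measure.measurePreserving_swap (μ := (volume : Measure ℝ)) (ν := volume))
    have he : ((fun z : ℝ × ℝ => (z.1, z.1 - z.2)) ∘ Prod.swap) = T := by
      funext z
      simp [hTdef, Prod.swap]
    rwa [he] at h
  have hpre : T ⁻¹' {p : ℝ × ℝ | |p.1 - p.2| ≤ r} = Icc (-r) r ×ˢ (univ : Set ℝ) := by
    ext ⟨t, x⟩
    simp only [hTdef, mem_preimage, mem_setOf_eq, sub_sub_cancel, mem_prod, mem_univ,
      and_true, mem_Icc, abs_le]
  have hchg : ∫⁻ p in {p : ℝ × ℝ | |p.1 - p.2| ≤ r}, ψ p ∂(volume.prod volume)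
      = ∫⁻ q in Icc (-r) r ×ˢ (univ : Set ℝ), ψ (T q) ∂(volume.prod volume) := by
    rw [← lintegral_indicator hS, ← hT.lintegral_comp (hψ.indicator hS),
      ← lintegral_indicator (measurableSet_Icc.prod MeasurableSet.univ) (fun q => ψ (T q))]
    congr 1
    funext q
    rw [← hpre]
    exact (Set.indicator_comp_right T).symm
  rw [hchg, ← Measure.prod_restrict, Measure.restrict_univ]
  have hmeas2 : AEMeasurable (fun q : ℝ × ℝ => ψ (T q))
      (((volume : Measure ℝ).restrict (Icc (-r) r)).prod volume) :=
    ((hψ.comp (measurable_snd.prodMk (measurable_snd.sub measurable_fst)))).aemeasurable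
  rw [lintegral_prod _ hmeas2]
  -- Step 3: inner integral
  have hg : Continuous (fun t : ℝ => ∫ x, f x * f (x - t)) := continuous_corr_aux f hf2
  have hinner : ∀ t : ℝ, (∫⁻ x, ψ (T (t, x)) ∂volume)
      = ENNReal.ofReal (∫ x, f x * f (x - t)) := by
    intro t
    have hft : MemLp (fun x => f (x - t)) 2 (volume : Measure ℝ) :=
      hf2.comp_measurePreserving (measurePreserving_sub_right volume t)
    have hint : Integrable (fun x => f x * f (x - t)) volume := by
      have h1 : (1 : ℝ≥0∞) / 1 = 1 / 2 + 1 / 2 := by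
        simp [ENNReal.inv_two_add_inv_two]
      have := (hft.smul (𝕜 := ℝ) hf2 : MemLp (f • fun x => f (x - t)) 1 volume)
      rw [memLp_one_iff_integrable] at this
      exact this.congr (Eventually.of_forall fun x => by simp [smul_eq_mul])
    have : (fun x => ψ (T (t, x))) = fun x => ENNReal.ofReal (f x * f (x - t)) := by
      funext x
      simp only [hψdef, hTdef, hFdef]
      rw [ENNReal.ofReal_mul (h0 x)]
    rw [this, ← ofReal_integral_eq_lintegral_ofReal hint
      (Eventually.of_forall fun x => mul_nonneg (h0 x) (h0 _))]
  simp_rw [hinner]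
  -- Step 4: outer integral
  have hgInt : IntegrableOn (fun t : ℝ => ∫ x, f x * f (x - t)) (Icc (-r) r) volume :=
    hg.integrableOn_Icc
  rw [← ofReal_integral_eq_lintegral_ofReal hgInt
    (Eventually.of_forall fun t => integral_nonneg fun x => mul_nonneg (h0 x) (h0 _))]

lemma tendsto_aux (f : ℝ → ℝ) (hm : Measurable f) (h0 : ∀ x, 0 ≤ f x)
    (hf2 : MemLp f 2 (volume : Measure ℝ))
    [IsFiniteMeasure (volume.withDensity fun x => ENNReal.ofReal (f x))] :
    Filter.Tendsto
      (fun r : ℝ => (((volume.withDensity fun x => ENNReal.ofReal (f x)).prod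
          (volume.withDensity fun x => ENNReal.ofReal (f x)))
          {p : ℝ × ℝ | |p.1 - p.2| ≤ r}).toReal / r)
      (𝓝[>] (0 : ℝ)) (𝓝 (2 * ∫ x, f x ^ 2)) := by
  have hg : Continuous (fun t : ℝ => ∫ x, f x * f (x - t)) := continuous_corr_aux f hf2
  set g : ℝ → ℝ := fun t => ∫ x, f x * f (x - t) with hgdef
  have hg0 : ∀ t, 0 ≤ g t := fun t => integral_nonneg fun x => mul_nonneg (h0 x) (h0 _)
  have hg02 : g 0 = ∫ x, f x ^ 2 := by
    simp only [hgdef, sub_zero]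
    exact integral_congr_ae (Eventually.of_forall fun x => (sq (f x)).symm)
  have hkey : ∀ r : ℝ, (((volume.withDensity fun x => ENNReal.ofReal (f x)).prod
      (volume.withDensity fun x => ENNReal.ofReal (f x)))
      {p : ℝ × ℝ | |p.1 - p.2| ≤ r}).toReal = ∫ t in Icc (-r) r, g t := by
    intro r
    rw [measure_eq_aux f hm h0 hf2 r, ENNReal.toReal_ofReal]
    exact setIntegral_nonneg measurableSet_Icc fun t _ => hg0 t
  rw [Metric.tendsto_nhdsWithin_nhds]
  intro ε hε
  obtain ⟨δ, hδ, hδ'⟩ := Metric.continuousAt_iff.mp (hg.continuousAt (x := 0)) (ε / 4)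
    (by positivity)
  refine ⟨δ, hδ, fun r hr hrδ => ?_⟩
  have hrpos : 0 < r := hr
  have hrδ' : r < δ := by
    rw [Real.dist_eq, sub_zero, abs_of_pos hrpos] at hrδ
    exact hrδ
  have h2r : ((volume : Measure ℝ) (Icc (-r) r)).toReal = 2 * r := by
    rw [Real.volume_Icc, ENNReal.toReal_ofReal (by linarith)]
    ring
  have hIccfin : (volume : Measure ℝ) (Icc (-r) r) < ⊤ := by
    rw [Real.volume_Icc]; exact ENNReal.ofReal_lt_top
  have hgI : IntegrableOn g (Icc (-r) r) volume := hg.integrableOn_Icc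
  have hconstI : IntegrableOn (fun _ : ℝ => g 0) (Icc (-r) r) volume :=
    integrableOn_const hIccfin.ne
  have hconst : ∫ _ in Icc (-r) r, g 0 = 2 * r * g 0 := by
    rw [setIntegral_const, measureReal_def, h2r, smul_eq_mul]
  have hsub : (∫ t in Icc (-r) r, g t) - 2 * r * g 0
      = ∫ t in Icc (-r) r, (g t - g 0) := by
    rw [integral_sub hgI hconstI, hconst]
  have hbound : ‖∫ t in Icc (-r) r, (g t - g 0)‖ ≤ ε / 4 * (2 * r) := by
    have := norm_setIntegral_le_of_norm_le_const (C := ε / 4) hIccfin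
      (fun t ht => by
        have habs : |t| < δ := lt_of_le_of_lt (abs_le.mpr (mem_Icc.mp ht)) hrδ'
        have := hδ' (by rw [Real.dist_eq, sub_zero]; exact habs)
        rw [Real.dist_eq] at this
        exact (Real.norm_eq_abs _ ▸ this.le))
    calc ‖∫ t in Icc (-r) r, (g t - g 0)‖ ≤ ε / 4 * ((volume : Measure ℝ) (Icc (-r) r)).toReal :=
          this
      _ = ε / 4 * (2 * r) := by rw [h2r]
  have hdivsub : (∫ t in Icc (-r) r, g t) / r - 2 * g 0
      = ((∫ t in Icc (-r) r, g t) - 2 * r * g 0) / r := by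
    field_simp
  rw [hkey r, Real.dist_eq, ← hg02, hdivsub, hsub, abs_div, abs_of_pos hrpos]
  rw [div_lt_iff₀ hrpos]
  calc |∫ t in Icc (-r) r, (g t - g 0)| ≤ ε / 4 * (2 * r) := by
        rw [← Real.norm_eq_abs]; exact hbound
    _ < ε * r := by nlinarith

/-- If a finite Borel measure `ν` on `ℝ` is absolutely continuous with respect to Lebesgue
measure with density `f ∈ L²(ℝ)`, then
`lim_{r→0⁺} (1/r)·(ν×ν){(x,y) : |x−y| ≤ r} = 2‖f‖₂²`. -/
theorem correlation_limit_of_L2_density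
    (ν : Measure ℝ) [IsFiniteMeasure ν] (f : ℝ → ℝ)
    (hf0 : ∀ᵐ x ∂(volume : Measure ℝ), 0 ≤ f x)
    (hν : ν = volume.withDensity (fun x => ENNReal.ofReal (f x)))
    (hf2 : MemLp f 2 volume) :
    Filter.Tendsto
      (fun r : ℝ => ((ν.prod ν) {p : ℝ × ℝ | |p.1 - p.2| ≤ r}).toReal / r)
      (𝓝[>] (0 : ℝ)) (𝓝 (2 * ∫ x, f x ^ 2)) := by
  have hfm : AEStronglyMeasurable f (volume : Measure ℝ) := hf2.aestronglyMeasurable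
  set f' : ℝ → ℝ := fun x => max (hfm.mk f x) 0 with hf'def
  have hf'm : Measurable f' :=
    hfm.stronglyMeasurable_mk.measurable.max measurable_const
  have heq : f =ᵐ[volume] f' := by
    filter_upwards [hfm.ae_eq_mk, hf0] with x hx h0x
    rw [hf'def]
    simp only
    rw [← hx, max_eq_left h0x]
  have h0' : ∀ x, 0 ≤ f' x := fun x => le_max_right _ _
  have hf2' : MemLp f' 2 (volume : Measure ℝ) :=
    ⟨hf2.1.congr heq, by rw [← eLpNorm_congr_ae heq]; exact hf2.2⟩
  have hνeq : ν = volume.withDensity fun x => ENNReal.ofReal (f' x) := by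
    rw [hν]
    exact withDensity_congr_ae (heq.mono fun x hx => by dsimp only; rw [hx])
  have hint : (∫ x, f x ^ 2) = ∫ x, f' x ^ 2 :=
    integral_congr_ae (heq.mono fun x hx => by dsimp only; rw [hx])
  haveI : IsFiniteMeasure (volume.withDensity fun x => ENNReal.ofReal (f' x)) := by
    rw [← hνeq]; infer_instance
  rw [hνeq, hint]
  exact tendsto_aux f' hf'm h0' hf2'
end
end
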